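/- Fix L > 0 and T > 0. Let 𝒢_L be the collection of subsets of ℝ × ℝ^n of the form Γ = {(s,y) : θ(y) ≤ s ≤ Θ(y)} \ ({(s,y) : s = Θ(y), y ∈ A_Θ} ∪ {(s,y) : s = θ(y), y ∈ A_θ}), where Θ, θ : ℝ^n → [0,T] are L-Lipschitz continuous and A_Θ, A_θ ⊆ ℝ^n are arbitrary. Then 𝒢_L is a semiring of sets: the empty set belongs to 𝒢_L; 𝒢_L is closed under pairwise intersection; and for any Γ, Γ₁ ∈ 𝒢_L with Γ₁ ⊆ Γ, there exist finitely many pairwise disjoint sets Γ₂, …, Γ_l ∈ 𝒢_L with Γ = Γ₁ ∪ Γ₂ ∪ ⋯ ∪ Γ_l. -/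
import Mathlib


open Set

/-- The collection `𝒢_L` of subsets of `ℝ × ℝⁿ` of the form
`{(s,y) : θ(y) ≤ s ≤ Θ(y)} \ ({s = Θ(y), y ∈ A_Θ} ∪ {s = θ(y), y ∈ A_θ})`,
where `Θ, θ : ℝⁿ → [0,T]` are `L`-Lipschitz and `A_Θ, A_θ` are arbitrary. -/
def GammaL (n : ℕ) (L T : ℝ) : Set (Set (ℝ × EuclideanSpace ℝ (Fin n))) :=
  {Γ | ∃ (Θ θ : EuclideanSpace ℝ (Fin n) → ℝ)
        (AΘ Aθ : Set (EuclideanSpace ℝ (Fin n))),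
      (∀ y, Θ y ∈ Icc 0 T) ∧ (∀ y, θ y ∈ Icc 0 T) ∧
      (∀ y₁ y₂, |Θ y₁ - Θ y₂| ≤ L * ‖y₁ - y₂‖) ∧
      (∀ y₁ y₂, |θ y₁ - θ y₂| ≤ L * ‖y₁ - y₂‖) ∧
      Γ = {p : ℝ × EuclideanSpace ℝ (Fin n) | θ p.2 ≤ p.1 ∧ p.1 ≤ Θ p.2} \
          ({p | p.1 = Θ p.2 ∧ p.2 ∈ AΘ} ∪ {p | p.1 = θ p.2 ∧ p.2 ∈ Aθ})}

namespace GammaLAux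

variable {n : ℕ} {L T : ℝ}

/-- Max of two `L`-Lipschitz functions is `L`-Lipschitz. -/
lemma lip_max {f g : EuclideanSpace ℝ (Fin n) → ℝ}
    (hf : ∀ y₁ y₂, |f y₁ - f y₂| ≤ L * ‖y₁ - y₂‖)
    (hg : ∀ y₁ y₂, |g y₁ - g y₂| ≤ L * ‖y₁ - y₂‖) :
    ∀ y₁ y₂, |max (f y₁) (g y₁) - max (f y₂) (g y₂)| ≤ L * ‖y₁ - y₂‖ := fun a b =>
  (abs_max_sub_max_le_max _ _ _ _).trans (max_le (hf a b) (hg a b))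

/-- Min of two `L`-Lipschitz functions is `L`-Lipschitz. -/
lemma lip_min {f g : EuclideanSpace ℝ (Fin n) → ℝ}
    (hf : ∀ y₁ y₂, |f y₁ - f y₂| ≤ L * ‖y₁ - y₂‖)
    (hg : ∀ y₁ y₂, |g y₁ - g y₂| ≤ L * ‖y₁ - y₂‖) :
    ∀ y₁ y₂, |min (f y₁) (g y₁) - min (f y₂) (g y₂)| ≤ L * ‖y₁ - y₂‖ := fun a b =>
  (abs_min_sub_min_le_max _ _ _ _).trans (max_le (hf a b) (hg a b))

/-- Membership in a basic block. -/
lemma mem_block {Θ θ : EuclideanSpace ℝ (Fin n) → ℝ}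
    {AΘ Aθ : Set (EuclideanSpace ℝ (Fin n))} {p : ℝ × EuclideanSpace ℝ (Fin n)} :
    p ∈ {p : ℝ × EuclideanSpace ℝ (Fin n) | θ p.2 ≤ p.1 ∧ p.1 ≤ Θ p.2} \
        ({p | p.1 = Θ p.2 ∧ p.2 ∈ AΘ} ∪ {p | p.1 = θ p.2 ∧ p.2 ∈ Aθ}) ↔
      (θ p.2 ≤ p.1 ∧ p.1 ≤ Θ p.2) ∧ ¬(p.1 = Θ p.2 ∧ p.2 ∈ AΘ) ∧ ¬(p.1 = θ p.2 ∧ p.2 ∈ Aθ) := by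
  simp only [mem_diff, mem_union, mem_setOf_eq, not_or]

/-- Every element of `GammaL` has a representation with `θ ≤ Θ` pointwise. -/
lemma exists_mono_repr {Γ : Set (ℝ × EuclideanSpace ℝ (Fin n))} (h : Γ ∈ GammaL n L T) :
    ∃ (Θ θ : EuclideanSpace ℝ (Fin n) → ℝ)
      (AΘ Aθ : Set (EuclideanSpace ℝ (Fin n))),
      (∀ y, Θ y ∈ Icc 0 T) ∧ (∀ y, θ y ∈ Icc 0 T) ∧
      (∀ y₁ y₂, |Θ y₁ - Θ y₂| ≤ L * ‖y₁ - y₂‖) ∧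
      (∀ y₁ y₂, |θ y₁ - θ y₂| ≤ L * ‖y₁ - y₂‖) ∧
      (∀ y, θ y ≤ Θ y) ∧
      Γ = {p : ℝ × EuclideanSpace ℝ (Fin n) | θ p.2 ≤ p.1 ∧ p.1 ≤ Θ p.2} \
          ({p | p.1 = Θ p.2 ∧ p.2 ∈ AΘ} ∪ {p | p.1 = θ p.2 ∧ p.2 ∈ Aθ}) := by
  obtain ⟨Θ, θ, AΘ, Aθ, hΘT, hθT, hΘL, hθL, rfl⟩ := h
  refine ⟨fun y => max (Θ y) (θ y), θ, AΘ ∪ {y | Θ y < θ y}, Aθ, ?_, hθT,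
    lip_max hΘL hθL, hθL, fun y => le_max_right _ _, ?_⟩
  · intro y
    exact ⟨le_trans (hΘT y).1 (le_max_left _ _), max_le (hΘT y).2 (hθT y).2⟩
  · ext ⟨s, y⟩
    simp only [mem_diff, mem_union, mem_setOf_eq, not_or]
    rcases le_or_gt (θ y) (Θ y) with h | h
    · rw [max_eq_left h]
      have hnl : ¬ Θ y < θ y := not_lt.2 h
      constructor
      · rintro ⟨hb, h1, h2⟩
        refine ⟨hb, ?_, h2⟩
        rintro ⟨hs, hA | hA⟩
        · exact h1 ⟨hs, hA⟩
        · exact hnl hA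
      · rintro ⟨hb, h1, h2⟩
        exact ⟨hb, fun hc => h1 ⟨hc.1, Or.inl hc.2⟩, h2⟩
    · rw [max_eq_right h.le]
      constructor
      · rintro ⟨⟨h1, h2⟩, -, -⟩
        exact absurd (h1.trans h2) (not_le.2 h)
      · rintro ⟨⟨h1, h2⟩, h3, -⟩
        exact absurd ⟨le_antisymm h2 h1, Or.inr h⟩ h3

end GammaLAux

open GammaLAux in
theorem GammaL_is_semiring (n : ℕ) (L T : ℝ) (hL : 0 < L) (hT : 0 < T) :
    (∅ ∈ GammaL n L T) ∧
    (∀ Γ Γ', Γ ∈ GammaL n L T → Γ' ∈ GammaL n L T → Γ ∩ Γ' ∈ GammaL n L T) ∧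
    (∀ Γ Γ₁, Γ ∈ GammaL n L T → Γ₁ ∈ GammaL n L T → Γ₁ ⊆ Γ →
      ∃ (l : ℕ) (F : Fin l → Set (ℝ × EuclideanSpace ℝ (Fin n))),
        (∀ i, F i ∈ GammaL n L T) ∧
        (∀ i j, i ≠ j → Disjoint (F i) (F j)) ∧
        (∀ i, Disjoint Γ₁ (F i)) ∧
        Γ = Γ₁ ∪ ⋃ i, F i) := by
  refine ⟨?_, ?_, ?_⟩
  · -- empty set
    refine ⟨fun _ => 0, fun _ => 0, univ, univ, ?_, ?_, ?_, ?_, ?_⟩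
    · exact fun y => ⟨le_refl 0, hT.le⟩
    · exact fun y => ⟨le_refl 0, hT.le⟩
    · intro y₁ y₂; simpa using mul_nonneg hL.le (norm_nonneg _)
    · intro y₁ y₂; simpa using mul_nonneg hL.le (norm_nonneg _)
    · ext ⟨s, y⟩
      simp only [mem_empty_iff_false, mem_diff, mem_union, mem_setOf_eq, mem_univ, and_true,
        false_iff]
      rintro ⟨⟨h1, h2⟩, h3⟩
      exact h3 (Or.inl (le_antisymm h2 h1))
  · -- intersection
    rintro Γ Γ' ⟨Θ, θ, A, B, hΘT, hθT, hΘL, hθL, rfl⟩ ⟨Θ', θ', A', B', hΘT', hθT', hΘL', hθL', rfl⟩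
    refine ⟨fun y => min (Θ y) (Θ' y), fun y => max (θ y) (θ' y),
      {y | (Θ y = min (Θ y) (Θ' y) ∧ y ∈ A) ∨ (Θ' y = min (Θ y) (Θ' y) ∧ y ∈ A')},
      {y | (θ y = max (θ y) (θ' y) ∧ y ∈ B) ∨ (θ' y = max (θ y) (θ' y) ∧ y ∈ B')},
      ?_, ?_, lip_min hΘL hΘL', lip_max hθL hθL', ?_⟩
    · intro y
      exact ⟨le_min (hΘT y).1 (hΘT' y).1, (min_le_left _ _).trans (hΘT y).2⟩
    · intro y
      exact ⟨(hθT y).1.trans (le_max_left _ _), max_le (hθT y).2 (hθT' y).2⟩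
    · ext ⟨s, y⟩
      simp only [mem_inter_iff, mem_diff, mem_union, mem_setOf_eq, not_or]
      constructor
      · rintro ⟨⟨⟨hl, hu⟩, he1, he2⟩, ⟨hl', hu'⟩, he1', he2'⟩
        refine ⟨⟨max_le hl hl', le_min hu hu'⟩, ?_, ?_⟩
        · rintro ⟨hs, hA | hA⟩
          · exact he1 ⟨hs.trans hA.1.symm, hA.2⟩
          · exact he1' ⟨hs.trans hA.1.symm, hA.2⟩
        · rintro ⟨hs, hB | hB⟩
          · exact he2 ⟨hs.trans hB.1.symm, hB.2⟩
          · exact he2' ⟨hs.trans hB.1.symm, hB.2⟩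
      · rintro ⟨⟨hl, hu⟩, he1, he2⟩
        have hl1 : θ y ≤ s := (le_max_left _ _).trans hl
        have hl2 : θ' y ≤ s := (le_max_right _ _).trans hl
        have hu1 : s ≤ Θ y := hu.trans (min_le_left _ _)
        have hu2 : s ≤ Θ' y := hu.trans (min_le_right _ _)
        refine ⟨⟨⟨hl1, hu1⟩, ?_, ?_⟩, ⟨hl2, hu2⟩, ?_, ?_⟩
        · rintro ⟨hs, hA⟩
          have h1 : s = min (Θ y) (Θ' y) := le_antisymm hu ((min_le_left _ _).trans hs.ge)
          exact he1 ⟨h1, Or.inl ⟨hs.symm.trans h1, hA⟩⟩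
        · rintro ⟨hs, hB⟩
          have h1 : s = max (θ y) (θ' y) := le_antisymm (hs.le.trans (le_max_left _ _)) hl
          exact he2 ⟨h1, Or.inl ⟨hs.symm.trans h1, hB⟩⟩
        · rintro ⟨hs, hA⟩
          have h1 : s = min (Θ y) (Θ' y) := le_antisymm hu ((min_le_right _ _).trans hs.ge)
          exact he1 ⟨h1, Or.inr ⟨hs.symm.trans h1, hA⟩⟩
        · rintro ⟨hs, hB⟩
          have h1 : s = max (θ y) (θ' y) := le_antisymm (hs.le.trans (le_max_right _ _)) hl
          exact he2 ⟨h1, Or.inr ⟨hs.symm.trans h1, hB⟩⟩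
  · -- difference
    intro Γ Γ₁ hΓ hΓ₁ hsub
    obtain ⟨Θ, θ, A, B, hΘT, hθT, hΘL, hθL, hθΘ, hΓrepr⟩ := exists_mono_repr hΓ
    obtain ⟨Θ₁, θ₁, A₁, B₁, hΘT₁, hθT₁, hΘL₁, hθL₁, hΓ₁repr⟩ := hΓ₁
    set lo : EuclideanSpace ℝ (Fin n) → ℝ := fun y => min (max (θ y) (θ₁ y)) (Θ y) with hlo_def
    set hi : EuclideanSpace ℝ (Fin n) → ℝ :=
      fun y => max (min (Θ y) (Θ₁ y)) (lo y) with hhi_def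
    have hlo0 : ∀ y, θ y ≤ lo y := fun y => le_min (le_max_left _ _) (hθΘ y)
    have hlohi : ∀ y, lo y ≤ hi y := fun y => le_max_right _ _
    have hhiT : ∀ y, hi y ≤ Θ y := fun y => max_le (min_le_left _ _) (min_le_right _ _)
    have hloLip : ∀ y₁ y₂, |lo y₁ - lo y₂| ≤ L * ‖y₁ - y₂‖ :=
      lip_min (lip_max hθL hθL₁) hΘL
    have hhiLip : ∀ y₁ y₂, |hi y₁ - hi y₂| ≤ L * ‖y₁ - y₂‖ :=
      lip_max (lip_min hΘL hΘL₁) hloLip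
    have hloBd : ∀ y, lo y ∈ Icc 0 T := fun y =>
      ⟨(hθT y).1.trans (hlo0 y), (min_le_right _ _).trans (hΘT y).2⟩
    have hhiBd : ∀ y, hi y ∈ Icc 0 T := fun y =>
      ⟨(hloBd y).1.trans (hlohi y), (hhiT y).trans (hΘT y).2⟩
    have memΓ : ∀ s y, (s, y) ∈ Γ ↔
        ((θ y ≤ s ∧ s ≤ Θ y) ∧ ¬(s = Θ y ∧ y ∈ A) ∧ ¬(s = θ y ∧ y ∈ B)) := by
      intro s y; rw [hΓrepr]; exact mem_block
    have memΓ₁ : ∀ s y, (s, y) ∈ Γ₁ ↔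
        ((θ₁ y ≤ s ∧ s ≤ Θ₁ y) ∧ ¬(s = Θ₁ y ∧ y ∈ A₁) ∧ ¬(s = θ₁ y ∧ y ∈ B₁)) := by
      intro s y; rw [hΓ₁repr]; exact mem_block
    -- strict interior of the [lo, hi] band is in Γ₁
    have key2 : ∀ s y, lo y < s → s < hi y → (s, y) ∈ Γ₁ := by
      intro s y h1 h2
      have hbΘ : s < min (Θ y) (Θ₁ y) := by
        rcases lt_max_iff.mp h2 with h | h
        · exact h
        · exact absurd h (not_lt.2 h1.le)
      have ha : max (θ y) (θ₁ y) < s := by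
        rcases min_lt_iff.mp h1 with h | h
        · exact h
        · exact absurd h (not_lt.2 (h2.le.trans (hhiT y)))
      rw [memΓ₁]
      refine ⟨⟨(le_max_right _ _).trans ha.le, hbΘ.le.trans (min_le_right _ _)⟩, ?_, ?_⟩
      · rintro ⟨he, -⟩
        exact (ne_of_lt (hbΘ.trans_le (min_le_right _ _))) he
      · rintro ⟨he, -⟩
        exact (ne_of_gt ((le_max_right (θ y) (θ₁ y)).trans_lt ha)) he
    -- Γ₁ lies between lo and hi
    have key3 : ∀ s y, (s, y) ∈ Γ₁ → lo y ≤ s ∧ s ≤ hi y := by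
      intro s y hp
      have hpΓ := hsub hp
      rw [memΓ] at hpΓ
      rw [memΓ₁] at hp
      obtain ⟨⟨hθs, hsΘ⟩, -, -⟩ := hpΓ
      obtain ⟨⟨hθ1s, hsΘ1⟩, -, -⟩ := hp
      exact ⟨(min_le_left _ _).trans (max_le hθs hθ1s),
        (le_min hsΘ hsΘ1).trans (le_max_left _ _)⟩
    -- the two pieces
    set Fup : Set (ℝ × EuclideanSpace ℝ (Fin n)) :=
      {p : ℝ × EuclideanSpace ℝ (Fin n) | hi p.2 ≤ p.1 ∧ p.1 ≤ Θ p.2} \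
        ({p | p.1 = Θ p.2 ∧ p.2 ∈ {y | (Θ y, y) ∉ Γ \ Γ₁}} ∪
         {p | p.1 = hi p.2 ∧ p.2 ∈ {y | (hi y, y) ∉ Γ \ Γ₁}}) with hFup_def
    set Fdn : Set (ℝ × EuclideanSpace ℝ (Fin n)) :=
      {p : ℝ × EuclideanSpace ℝ (Fin n) | θ p.2 ≤ p.1 ∧ p.1 ≤ lo p.2} \
        ({p | p.1 = lo p.2 ∧ p.2 ∈ {y | lo y = hi y ∨ (lo y, y) ∉ Γ \ Γ₁}} ∪
         {p | p.1 = θ p.2 ∧ p.2 ∈ {y | θ y = hi y ∨ (θ y, y) ∉ Γ \ Γ₁}}) with hFdn_def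
    have hFup : Fup = (Γ \ Γ₁) ∩ {p | hi p.2 ≤ p.1} := by
      ext ⟨s, y⟩
      rw [hFup_def]
      simp only [mem_diff, mem_union, mem_setOf_eq, not_or, mem_inter_iff]
      constructor
      · rintro ⟨⟨h1, h2⟩, he1, he2⟩
        by_cases hc1 : s = Θ y
        · have hmem : (Θ y, y) ∈ Γ ∧ (Θ y, y) ∉ Γ₁ := not_not.mp fun h => he1 ⟨hc1, h⟩
          subst hc1
          exact ⟨hmem, h1⟩
        by_cases hc2 : s = hi y
        · have hmem : (hi y, y) ∈ Γ ∧ (hi y, y) ∉ Γ₁ := not_not.mp fun h => he2 ⟨hc2, h⟩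
          subst hc2
          exact ⟨hmem, le_refl _⟩
        · have hs1 : hi y < s := lt_of_le_of_ne h1 (Ne.symm hc2)
          refine ⟨⟨?_, ?_⟩, h1⟩
          · rw [memΓ]
            refine ⟨⟨(hlo0 y).trans ((hlohi y).trans h1), h2⟩, ?_, ?_⟩
            · rintro ⟨he, -⟩; exact hc1 he
            · rintro ⟨he, -⟩
              exact (ne_of_gt (((hlo0 y).trans (hlohi y)).trans_lt hs1)) he
          · intro hmem
            exact absurd (key3 s y hmem).2 (not_le.2 hs1)
      · rintro ⟨⟨hmem, hmem1⟩, hge⟩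
        have hsΘ : s ≤ Θ y := ((memΓ s y).mp hmem).1.2
        refine ⟨⟨hge, hsΘ⟩, ?_, ?_⟩
        · rintro ⟨he, hne⟩
          refine hne ?_
          rw [← he]
          exact ⟨hmem, hmem1⟩
        · rintro ⟨he, hne⟩
          refine hne ?_
          rw [← he]
          exact ⟨hmem, hmem1⟩
    have hFdn : Fdn = (Γ \ Γ₁) ∩ {p | p.1 ≤ lo p.2 ∧ p.1 < hi p.2} := by
      ext ⟨s, y⟩
      rw [hFdn_def]
      simp only [mem_diff, mem_union, mem_setOf_eq, not_or, mem_inter_iff]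
      constructor
      · rintro ⟨⟨h1, h2⟩, he1, he2⟩
        by_cases hc1 : s = lo y
        · have h' : ¬(lo y = hi y ∨ (lo y, y) ∉ Γ \ Γ₁) := fun h => he1 ⟨hc1, h⟩
          obtain ⟨hne, hX⟩ := not_or.mp h'
          have hmem : (lo y, y) ∈ Γ ∧ (lo y, y) ∉ Γ₁ := not_not.mp hX
          subst hc1
          exact ⟨hmem, le_refl _, lt_of_le_of_ne (hlohi y) hne⟩
        by_cases hc2 : s = θ y
        · have h' : ¬(θ y = hi y ∨ (θ y, y) ∉ Γ \ Γ₁) := fun h => he2 ⟨hc2, h⟩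
          obtain ⟨hne, hX⟩ := not_or.mp h'
          have hmem : (θ y, y) ∈ Γ ∧ (θ y, y) ∉ Γ₁ := not_not.mp hX
          subst hc2
          exact ⟨hmem, h2, lt_of_le_of_ne ((hlo0 y).trans (hlohi y)) hne⟩
        · have hslo : s < lo y := lt_of_le_of_ne h2 hc1
          refine ⟨⟨?_, ?_⟩, h2, hslo.trans_le (hlohi y)⟩
          · rw [memΓ]
            refine ⟨⟨h1, hslo.le.trans (min_le_right _ _)⟩, ?_, ?_⟩
            · rintro ⟨he, -⟩
              exact (ne_of_lt (hslo.trans_le (min_le_right _ _))) he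
            · rintro ⟨he, -⟩; exact hc2 he
          · intro hmem
            exact absurd (key3 s y hmem).1 (not_le.2 hslo)
      · rintro ⟨⟨hmem, hmem1⟩, hle, hlt⟩
        have hθs : θ y ≤ s := ((memΓ s y).mp hmem).1.1
        refine ⟨⟨hθs, hle⟩, ?_, ?_⟩
        · rintro ⟨he, hc | hne⟩
          · exact absurd hlt (not_lt.2 ((he.trans hc).ge))
          · refine hne ?_
            rw [← he]
            exact ⟨hmem, hmem1⟩
        · rintro ⟨he, hc | hne⟩
          · exact absurd hlt (not_lt.2 ((he.trans hc).ge))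
          · refine hne ?_
            rw [← he]
            exact ⟨hmem, hmem1⟩
    have hdisj : Disjoint Fup Fdn := by
      rw [Set.disjoint_left]
      intro p hp hp'
      rw [hFup] at hp
      rw [hFdn] at hp'
      exact absurd hp'.2.2 (not_lt.2 hp.2)
    have hd1 : Disjoint Γ₁ Fup := by
      rw [Set.disjoint_left]
      intro p hp hpF
      rw [hFup] at hpF
      exact hpF.1.2 hp
    have hd2 : Disjoint Γ₁ Fdn := by
      rw [Set.disjoint_left]
      intro p hp hpF
      rw [hFdn] at hpF
      exact hpF.1.2 hp
    have hU : (⋃ i, (![Fup, Fdn] : Fin 2 → Set (ℝ × EuclideanSpace ℝ (Fin n))) i)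
        = Fup ∪ Fdn := by
      ext p
      simp only [mem_iUnion, Fin.exists_fin_two, mem_union]
      exact Iff.rfl
    refine ⟨2, ![Fup, Fdn], ?_, ?_, ?_, ?_⟩
    · intro i
      fin_cases i
      · exact ⟨Θ, hi, _, _, hΘT, hhiBd, hΘL, hhiLip, hFup_def⟩
      · exact ⟨lo, θ, _, _, hloBd, hθT, hloLip, hθL, hFdn_def⟩
    · intro i j hij
      fin_cases i <;> fin_cases j
      · exact absurd rfl hij
      · exact hdisj
      · exact hdisj.symm
      · exact absurd rfl hij
    · intro i
      fin_cases i
      · exact hd1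
      · exact hd2
    · rw [hU]
      ext ⟨s, y⟩
      simp only [mem_union]
      constructor
      · intro hp
        by_cases h1 : (s, y) ∈ Γ₁
        · exact Or.inl h1
        by_cases h2 : hi y ≤ s
        · refine Or.inr (Or.inl ?_)
          rw [hFup]
          exact ⟨⟨hp, h1⟩, h2⟩
        · have hlt : s < hi y := not_le.1 h2
          have hle : s ≤ lo y := by
            by_contra h3
            exact h1 (key2 s y (not_le.1 h3) hlt)
          refine Or.inr (Or.inr ?_)
          rw [hFdn]
          exact ⟨⟨hp, h1⟩, hle, hlt⟩
      · rintro (h | h | h)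
        · exact hsub h
        · rw [hFup] at h; exact h.1.1
        · rw [hFdn] at h; exact h.1.1
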